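/- Let C be a category with finite limits that admits coequalizers of equivalence relations, in which equivalence relations are effective and effective epimorphisms are stable under pullback. Then for any equivalence relation X₁ ⇉ X₀ with quotient q : X₀ → X₀/X₁, and any cospan X₀ → Z ← Y in C, the canonical map coeq(X₁ ×_Z Y ⇉ X₀ ×_Z Y) → (X₀/X₁) ×_Z Y is an isomorphism; i.e., quotients of equivalence relations are universal. -/

import Mathlib

open CategoryTheory CategoryTheory.Limits

universe v u

variable (C : Type u) [Category.{v} C] [HasFiniteLimits C]

/-- An equivalence groupoid in `C`: a pair of objects with a monomorphism
`X₁ ⟶ X₀ ⨯ X₀` which is an internal equivalence relation. -/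
structure EqGpd where
  X₀ : C
  X₁ : C
  d₀ : X₁ ⟶ X₀
  d₁ : X₁ ⟶ X₀
  mono : Mono (prod.lift d₀ d₁)
  refl : ∀ (T : C) (x : T ⟶ X₀), ∃ h : T ⟶ X₁, h ≫ d₀ = x ∧ h ≫ d₁ = x
  symm : ∀ (T : C) (x y : T ⟶ X₀), (∃ h : T ⟶ X₁, h ≫ d₀ = x ∧ h ≫ d₁ = y) →
    ∃ h : T ⟶ X₁, h ≫ d₀ = y ∧ h ≫ d₁ = x
  trans : ∀ (T : C) (x y z : T ⟶ X₀),
    (∃ h : T ⟶ X₁, h ≫ d₀ = x ∧ h ≫ d₁ = y) →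
    (∃ h : T ⟶ X₁, h ≫ d₀ = y ∧ h ≫ d₁ = z) →
    ∃ h : T ⟶ X₁, h ≫ d₀ = x ∧ h ≫ d₁ = z

namespace EqGpd

variable {C}

/-- A morphism of equivalence groupoids. -/
@[ext]
structure Hom (A B : EqGpd C) where
  f₀ : A.X₀ ⟶ B.X₀
  f₁ : A.X₁ ⟶ B.X₁
  w₀ : f₁ ≫ B.d₀ = A.d₀ ≫ f₀
  w₁ : f₁ ≫ B.d₁ = A.d₁ ≫ f₀

instance : Category (EqGpd C) where
  Hom A B := Hom A B
  id A := ⟨𝟙 _, 𝟙 _, by simp, by simp⟩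
  comp {A B D} f g := ⟨f.f₀ ≫ g.f₀, f.f₁ ≫ g.f₁,
    by rw [Category.assoc, g.w₀, ← Category.assoc, f.w₀, Category.assoc],
    by rw [Category.assoc, g.w₁, ← Category.assoc, f.w₁, Category.assoc]⟩
  id_comp f := by apply Hom.ext <;> simp
  comp_id f := by apply Hom.ext <;> simp
  assoc f g h := by apply Hom.ext <;> simp

@[simp] lemma comp_f₀ {A B D : EqGpd C} (f : A ⟶ B) (g : B ⟶ D) :
    (f ≫ g).f₀ = f.f₀ ≫ g.f₀ := rfl

@[simp] lemma comp_f₁ {A B D : EqGpd C} (f : A ⟶ B) (g : B ⟶ D) :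
    (f ≫ g).f₁ = f.f₁ ≫ g.f₁ := rfl

@[simp] lemma id_f₀ (A : EqGpd C) : (𝟙 A : A ⟶ A).f₀ = 𝟙 A.X₀ := rfl

@[simp] lemma id_f₁ (A : EqGpd C) : (𝟙 A : A ⟶ A).f₁ = 𝟙 A.X₁ := rfl

/-- The homotopy relation on morphisms of equivalence groupoids. -/
def htpy : HomRel (EqGpd C) := fun {A B} f g =>
  ∃ h : A.X₀ ⟶ B.X₁, h ≫ B.d₀ = f.f₀ ∧ h ≫ B.d₁ = g.f₀

/-- The embedding of `C` into equivalence groupoids via diagonals. -/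
def disc : C ⥤ EqGpd C where
  obj X :=
    { X₀ := X
      X₁ := X
      d₀ := 𝟙 X
      d₁ := 𝟙 X
      mono := ⟨fun {Z} g h w => by
        have := congrArg (fun t => t ≫ (prod.fst : X ⨯ X ⟶ X)) w
        have e : prod.lift (𝟙 X) (𝟙 X) ≫ (prod.fst : X ⨯ X ⟶ X) = 𝟙 X := prod.lift_fst _ _
        simp only [Category.assoc] at this
        calc g = g ≫ (prod.lift (𝟙 X) (𝟙 X) ≫ (prod.fst : X ⨯ X ⟶ X)) := by rw [e, Category.comp_id]
          _ = h ≫ (prod.lift (𝟙 X) (𝟙 X) ≫ (prod.fst : X ⨯ X ⟶ X)) := this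
          _ = h := by rw [e, Category.comp_id]⟩
      refl := fun T x => ⟨x, by simp, by simp⟩
      symm := fun T x y ⟨h, h0, h1⟩ => ⟨h, by simpa using h1, by simpa using h0⟩
      trans := fun T x y z ⟨h, h0, h1⟩ ⟨k, k0, k1⟩ =>
        ⟨h, h0, by
          simp only [Category.comp_id] at h0 h1 k0 k1 ⊢
          rw [h1, ← k0]; exact k1⟩ }
  map {X Y} u := ⟨u, u, by simp, by simp⟩
  map_id X := by apply Hom.ext <;> simp
  map_comp f g := by apply Hom.ext <;> simp

end EqGpd

variable {C}

/-- `f` is an effective epimorphism: it is the coequalizer of its kernel pair. -/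
def IsEffectiveEpi {X Y : C} (f : X ⟶ Y) : Prop :=
  ∃ w : pullback.fst f f ≫ f = pullback.snd f f ≫ f,
    Nonempty (IsColimit (Cofork.ofπ f w))


/-- Transfer a coequalizer along morphisms relating two parallel pairs with the same target. -/
noncomputable def coforkTransfer {K K' X W : C}
    {u v : K ⟶ X} {u' v' : K' ⟶ X} {π : X ⟶ W}
    (e' : K ⟶ K') (hu' : e' ≫ u' = u) (hv' : e' ≫ v' = v)
    (e : K' ⟶ K) (hu : e ≫ u = u') (hv : e ≫ v = v')
    (w : u ≫ π = v ≫ π) (hc : IsColimit (Cofork.ofπ π w))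
    (w' : u' ≫ π = v' ≫ π) : IsColimit (Cofork.ofπ π w') := by
  apply Cofork.IsColimit.ofExistsUnique
  intro s
  have hcond : u ≫ s.π = v ≫ s.π := by
    rw [← hu', ← hv', Category.assoc, Category.assoc, s.condition]
  refine ⟨Cofork.IsColimit.desc hc s.π hcond, ?_, ?_⟩
  · simpa using Cofork.IsColimit.π_desc' hc s.π hcond
  · intro m hm
    apply Cofork.IsColimit.hom_ext hc
    simp only [Cofork.π_ofπ] at hm ⊢
    rw [hm]
    exact (Cofork.IsColimit.π_desc' hc s.π hcond).symm

/-- in a finitely complete category admitting coequalizers of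
equivalence relations, in which equivalence relations are effective and effective
epimorphisms are stable under pullback, quotients of equivalence relations are
universal: for an equivalence relation `X₁ ⇉ X₀` with quotient `q : X₀ ⟶ X₀/X₁` and a
cospan `X₀ → Z ← Y`, the canonical map
`coeq (X₁ ×_Z Y ⇉ X₀ ×_Z Y) ⟶ (X₀/X₁) ×_Z Y` is an isomorphism, i.e. the base change
of the quotient map is again the corresponding quotient. -/
theorem quotients_of_equivalence_relations_are_universal
    (heff : ∀ A : EqGpd C, ∃ (Q : C) (q : A.X₀ ⟶ Q) (w : A.d₀ ≫ q = A.d₁ ≫ q),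
      Nonempty (IsColimit (Cofork.ofπ q w)) ∧ IsIso (pullback.lift A.d₀ A.d₁ w))
    (hstab : ∀ {X Y Z : C} (f : X ⟶ Y) (g : Z ⟶ Y),
      IsEffectiveEpi f → IsEffectiveEpi (pullback.snd f g))
    (A : EqGpd C) (Q : C) (q : A.X₀ ⟶ Q) (w : A.d₀ ≫ q = A.d₁ ≫ q)
    (hc : IsColimit (Cofork.ofπ q w))
    (Z Y : C) (g : A.X₀ ⟶ Z) (h : Y ⟶ Z) (hg : A.d₀ ≫ g = A.d₁ ≫ g)
    (gbar : Q ⟶ Z) (hgbar : q ≫ gbar = g) :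
    ∃ wκ : pullback.map (A.d₀ ≫ g) h g h A.d₀ (𝟙 Y) (𝟙 Z) (by simp) (by simp) ≫
          pullback.map g h gbar h q (𝟙 Y) (𝟙 Z) (by rw [Category.comp_id, hgbar]) (by simp) =
        pullback.map (A.d₀ ≫ g) h g h A.d₁ (𝟙 Y) (𝟙 Z)
            (by rw [Category.comp_id, hg]) (by simp) ≫
          pullback.map g h gbar h q (𝟙 Y) (𝟙 Z) (by rw [Category.comp_id, hgbar]) (by simp),
      Nonempty (IsColimit (Cofork.ofπ
        (pullback.map g h gbar h q (𝟙 Y) (𝟙 Z)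
          (by rw [Category.comp_id, hgbar]) (by simp)) wκ)) := by
  classical
  obtain ⟨Q', q', w', ⟨hc'⟩, hiso⟩ := heff A
  -- `q'` factors through `q`
  have hm0 : A.d₀ ≫ q' = A.d₁ ≫ q' := w'
  set m0 : Q ⟶ Q' := Cofork.IsColimit.desc hc q' hm0 with hm0def
  have hqm0 : q ≫ m0 = q' := by
    simpa using Cofork.IsColimit.π_desc' hc q' hm0
  -- the kernel-pair property of (d₀, d₁) relative to q
  have kp : ∀ (T : C) (x y : T ⟶ A.X₀), x ≫ q = y ≫ q
      → ∃ t : T ⟶ A.X₁, t ≫ A.d₀ = x ∧ t ≫ A.d₁ = y := by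
    intro T x y hxy
    have hxy' : x ≫ q' = y ≫ q' := by
      rw [← hqm0, ← Category.assoc, ← Category.assoc, hxy]
    refine ⟨pullback.lift x y hxy' ≫ inv (pullback.lift A.d₀ A.d₁ w'), ?_, ?_⟩
    · have hL0 : inv (pullback.lift A.d₀ A.d₁ w') ≫ A.d₀ = pullback.fst q' q' := by
        rw [IsIso.inv_comp_eq, pullback.lift_fst]
      rw [Category.assoc, hL0, pullback.lift_fst]
    · have hL1 : inv (pullback.lift A.d₀ A.d₁ w') ≫ A.d₁ = pullback.snd q' q' := by
        rw [IsIso.inv_comp_eq, pullback.lift_snd]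
      rw [Category.assoc, hL1, pullback.lift_snd]
  -- q is an effective epimorphism
  have hq : IsEffectiveEpi q := by
    refine ⟨pullback.condition, ?_⟩
    obtain ⟨e, he0, he1⟩ := kp _ (pullback.fst q q) (pullback.snd q q) pullback.condition
    exact ⟨coforkTransfer (pullback.lift A.d₀ A.d₁ w) (pullback.lift_fst _ _ _)
      (pullback.lift_snd _ _ _) e he0 he1 w hc pullback.condition⟩
  -- the pulled back map along Y ⟶ Z
  obtain ⟨wσ, ⟨hσ⟩⟩ := hstab q (pullback.fst gbar h) hq
  have hPcond : pullback.fst q (pullback.fst gbar h) ≫ q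
      = pullback.snd q (pullback.fst gbar h) ≫ pullback.fst gbar h := pullback.condition
  have hKcond : pullback.fst (pullback.snd q (pullback.fst gbar h))
        (pullback.snd q (pullback.fst gbar h)) ≫ pullback.snd q (pullback.fst gbar h)
      = pullback.snd (pullback.snd q (pullback.fst gbar h))
        (pullback.snd q (pullback.fst gbar h)) ≫ pullback.snd q (pullback.fst gbar h) :=
    pullback.condition
  have hBcond : pullback.fst gbar h ≫ gbar = pullback.snd gbar h ≫ h := pullback.condition
  set π : pullback g h ⟶ pullback gbar h :=
    pullback.map g h gbar h q (𝟙 Y) (𝟙 Z)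
      (by rw [Category.comp_id, hgbar]) (by simp) with hπdef
  set u : pullback (A.d₀ ≫ g) h ⟶ pullback g h :=
    pullback.map (A.d₀ ≫ g) h g h A.d₀ (𝟙 Y) (𝟙 Z) (by simp) (by simp) with hudef
  set v : pullback (A.d₀ ≫ g) h ⟶ pullback g h :=
    pullback.map (A.d₀ ≫ g) h g h A.d₁ (𝟙 Y) (𝟙 Z)
      (by rw [Category.comp_id, hg]) (by simp) with hvdef
  have hπfst : π ≫ pullback.fst gbar h = pullback.fst g h ≫ q := pullback.lift_fst _ _ _
  have hπsnd : π ≫ pullback.snd gbar h = pullback.snd g h :=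
    (pullback.lift_snd _ _ _).trans (Category.comp_id _)
  have hufst : u ≫ pullback.fst g h = pullback.fst (A.d₀ ≫ g) h ≫ A.d₀ :=
    pullback.lift_fst _ _ _
  have husnd : u ≫ pullback.snd g h = pullback.snd (A.d₀ ≫ g) h :=
    (pullback.lift_snd _ _ _).trans (Category.comp_id _)
  have hvfst : v ≫ pullback.fst g h = pullback.fst (A.d₀ ≫ g) h ≫ A.d₁ :=
    pullback.lift_fst _ _ _
  have hvsnd : v ≫ pullback.snd g h = pullback.snd (A.d₀ ≫ g) h :=
    (pullback.lift_snd _ _ _).trans (Category.comp_id _)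
  -- the comparison map ψ : pullback q (fst gbar h) ⟶ pullback g h and its retraction χ
  have hψw : pullback.fst q (pullback.fst gbar h) ≫ g
      = (pullback.snd q (pullback.fst gbar h) ≫ pullback.snd gbar h) ≫ h := by
    rw [← hgbar, reassoc_of% hPcond, hBcond, Category.assoc]
  obtain ⟨ψ, hψfst, hψsnd⟩ := pullback.lift' (pullback.fst q (pullback.fst gbar h))
    (pullback.snd q (pullback.fst gbar h) ≫ pullback.snd gbar h) hψw
  obtain ⟨χ, hχfst, hχσ⟩ := pullback.lift' (pullback.fst g h) π hπfst.symm
  have hχψ : χ ≫ ψ = 𝟙 (pullback g h) := by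
    apply pullback.hom_ext
    · rw [Category.assoc, hψfst, hχfst, Category.id_comp]
    · rw [Category.assoc, hψsnd, ← Category.assoc, hχσ, hπsnd, Category.id_comp]
  have hψπ : ψ ≫ π = pullback.snd q (pullback.fst gbar h) := by
    apply pullback.hom_ext
    · rw [Category.assoc, hπfst, ← Category.assoc, hψfst, hPcond]
    · rw [Category.assoc, hπsnd, hψsnd]
  -- the two parallel maps are coequalized by π
  have wκ : u ≫ π = v ≫ π := by
    apply pullback.hom_ext
    · simp only [Category.assoc]
      rw [hπfst, reassoc_of% hufst, reassoc_of% hvfst, w]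
    · simp only [Category.assoc]
      rw [hπsnd, husnd, hvsnd]
  refine ⟨wκ, ?_⟩
  -- construct the map e from the kernel pair of σ to pullback (d₀ ≫ g) h
  have hkq : (pullback.fst (pullback.snd q (pullback.fst gbar h))
          (pullback.snd q (pullback.fst gbar h)) ≫ pullback.fst q (pullback.fst gbar h)) ≫ q
      = (pullback.snd (pullback.snd q (pullback.fst gbar h))
          (pullback.snd q (pullback.fst gbar h)) ≫ pullback.fst q (pullback.fst gbar h)) ≫ q := by
    simp only [Category.assoc]
    rw [hPcond, reassoc_of% hKcond]
  obtain ⟨t, ht0, ht1⟩ := kp _ _ _ hkq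
  have hew : t ≫ (A.d₀ ≫ g)
      = (pullback.fst (pullback.snd q (pullback.fst gbar h))
          (pullback.snd q (pullback.fst gbar h)) ≫ ψ ≫ pullback.snd g h) ≫ h := by
    rw [hψsnd]
    simp only [Category.assoc]
    rw [reassoc_of% ht0, ← hgbar, reassoc_of% hPcond, hBcond]
  obtain ⟨e, hefst, hesnd⟩ := pullback.lift' t
    (pullback.fst (pullback.snd q (pullback.fst gbar h))
      (pullback.snd q (pullback.fst gbar h)) ≫ ψ ≫ pullback.snd g h) hew
  have heu : e ≫ u = pullback.fst (pullback.snd q (pullback.fst gbar h))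
      (pullback.snd q (pullback.fst gbar h)) ≫ ψ := by
    apply pullback.hom_ext
    · simp only [Category.assoc]
      rw [hufst, hψfst, reassoc_of% hefst, ht0]
    · simp only [Category.assoc]
      rw [husnd, hesnd, hψsnd]
  have hev : e ≫ v = pullback.snd (pullback.snd q (pullback.fst gbar h))
      (pullback.snd q (pullback.fst gbar h)) ≫ ψ := by
    apply pullback.hom_ext
    · simp only [Category.assoc]
      rw [hvfst, hψfst, reassoc_of% hefst, ht1]
    · simp only [Category.assoc]
      rw [hvsnd, hesnd, hψsnd, reassoc_of% hKcond]
  -- now build the colimit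
  refine ⟨Cofork.IsColimit.ofExistsUnique ?_⟩
  intro s
  have hs : u ≫ s.π = v ≫ s.π := s.condition
  have hcond : pullback.fst (pullback.snd q (pullback.fst gbar h))
        (pullback.snd q (pullback.fst gbar h)) ≫ ψ ≫ s.π
      = pullback.snd (pullback.snd q (pullback.fst gbar h))
        (pullback.snd q (pullback.fst gbar h)) ≫ ψ ≫ s.π := by
    calc _ = (e ≫ u) ≫ s.π := by rw [heu, Category.assoc]
    _ = (e ≫ v) ≫ s.π := by rw [Category.assoc, Category.assoc, hs]
    _ = _ := by rw [hev, Category.assoc]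
  have hdesc : pullback.snd q (pullback.fst gbar h)
      ≫ Cofork.IsColimit.desc hσ (ψ ≫ s.π) hcond = ψ ≫ s.π := by
    simpa using Cofork.IsColimit.π_desc' hσ (ψ ≫ s.π) hcond
  refine ⟨Cofork.IsColimit.desc hσ (ψ ≫ s.π) hcond, ?_, ?_⟩
  · simp only [Cofork.π_ofπ]
    have hfac : χ ≫ pullback.snd q (pullback.fst gbar h)
        ≫ Cofork.IsColimit.desc hσ (ψ ≫ s.π) hcond = s.π := by
      rw [hdesc, ← Category.assoc, hχψ, Category.id_comp]
    rw [← Category.assoc, hχσ] at hfac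
    exact hfac
  · intro m hm
    simp only [Cofork.π_ofπ] at hm
    apply Cofork.IsColimit.hom_ext hσ
    simp only [Cofork.π_ofπ]
    have h1 : pullback.snd q (pullback.fst gbar h) ≫ m = ψ ≫ s.π := by
      rw [← hψπ, Category.assoc, hm]
    rw [h1, hdesc]
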